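/- Monomial symmetric functions of the b-deformed Jucys–Murphy operators and bt-monotone counts: Let k ≥ 1 and r ≥ 0. In the free ℤ[b,t]-module with basis 𝒫_k, Σ_{ν ⊢ r} t^{ℓ(ν)} m_ν^≥(𝒥_1,…,𝒥_k)(𝔢_k) = Σ_{μ ⊢ k} ĥ_r(μ) · 𝔭_μ, where for a partition ν of r with ℓ parts, m_ν^≥(𝒥_1,…,𝒥_k) = Σ 𝒥_{i_1}^{a_1} 𝒥_{i_2}^{a_2} ⋯ 𝒥_{i_ℓ}^{a_ℓ}, the sum being over all indices k ≥ i_1 > i_2 > ⋯ > i_ℓ ≥ 1 and all distinct sequences (a_1,…,a_ℓ) obtained by rearranging the parts of ν (the decreasing-index ordered analogue of the monomial symmetric polynomial m_ν). -/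

import Mathlib

open scoped Classical
open MeasureTheory



/-- A pair partition of `{1, …, 2k}`, encoded as an involution of `ℕ` that
moves exactly the points `1, …, 2k`.  The pairs are the two-element sets `{a, f a}`. -/
structure PairPartition (k : ℕ) where
  f : ℕ → ℕ
  invol : ∀ a, f (f a) = a
  moves : ∀ a, f a ≠ a ↔ (1 ≤ a ∧ a ≤ 2 * k)

namespace PairPartition

/-- The function underlying the identity (trivial) pair partition
`(1 2 | 3 4 | ⋯ | 2k-1 2k)`. -/
def trivFun (k : ℕ) (a : ℕ) : ℕ :=
  if 1 ≤ a ∧ a ≤ 2 * k then (if a % 2 = 1 then a + 1 else a - 1) else a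

/-- The identity pair partition `𝔢_k = (1 2 | 3 4 | ⋯ | 2k-1 2k)`. -/
def triv (k : ℕ) : PairPartition k where
  f := trivFun k
  invol := by intro a; unfold trivFun; split_ifs <;> omega
  moves := by intro a; unfold trivFun; split_ifs <;> omega

theorem ext' {k : ℕ} {m m' : PairPartition k} (h : m.f = m'.f) : m = m' := by
  cases m; cases m'; simpa using h

/-- The action of the transposition `(i j) ∈ S_{2k}` on pair partitions of `{1, …, 2k}`
(defined to do nothing if `i` or `j` lies outside `{1, …, 2k}`). -/
def swapAct {k : ℕ} (i j : ℕ) (m : PairPartition k) : PairPartition k :=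
  if h : 1 ≤ i ∧ i ≤ 2 * k ∧ 1 ≤ j ∧ j ≤ 2 * k then
    { f := fun a => Equiv.swap i j (m.f (Equiv.swap i j a))
      invol := by intro a; simp [m.invol]
      moves := by
        obtain ⟨hi1, hi2, hj1, hj2⟩ := h
        intro a
        have key : ∀ x y : ℕ, Equiv.swap i j x ≠ y ↔ x ≠ Equiv.swap i j y := by
          intro x y
          constructor
          · intro hxy hc; apply hxy; rw [hc]; simp
          · intro hxy hc; apply hxy; rw [← hc]; simp
        rw [key, ← Equiv.swap_apply_self i j a, Equiv.swap_apply_self i j a]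
        rw [m.moves (Equiv.swap i j a)]
        rcases eq_or_ne a i with rfl | hai
        · rw [Equiv.swap_apply_left]; omega
        rcases eq_or_ne a j with rfl | haj
        · rw [Equiv.swap_apply_right]; omega
        · rw [Equiv.swap_apply_of_ne_of_ne hai haj] }
  else m

/-- Removing the pair `{2k-1, 2k}` from a pair partition: the operation `𝔪 ↦ 𝔪↓`
(defined to return the trivial pair partition if `{2k-1, 2k} ∉ 𝔪`). -/
def down {k : ℕ} (m : PairPartition k) : PairPartition (k - 1) :=
  if h : m.f (2 * k - 1) = 2 * k then
    { f := fun a => if a = 2 * k - 1 ∨ a = 2 * k then a else m.f a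
      invol := by
        intro a
        by_cases ha : a = 2 * k - 1 ∨ a = 2 * k
        · simp [ha]
        · have h2k : m.f (2 * k) = 2 * k - 1 := by
            conv_lhs => rw [← h]
            exact m.invol _
          have hne1 : m.f a ≠ 2 * k - 1 := by
            intro hfa
            have h1 : m.f (m.f a) = m.f (2 * k - 1) := by rw [hfa]
            rw [m.invol, h] at h1
            exact ha (Or.inr h1)
          have hne2 : m.f a ≠ 2 * k := by
            intro hfa
            have h1 : m.f (m.f a) = m.f (2 * k) := by rw [hfa]
            rw [m.invol, h2k] at h1
            exact ha (Or.inl h1)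
          simp only [if_neg ha, if_neg (not_or.mpr ⟨hne1, hne2⟩), m.invol]
      moves := by
        intro a
        by_cases ha : a = 2 * k - 1 ∨ a = 2 * k
        · simp only [if_pos ha]
          rcases ha with ha | ha <;> subst ha <;> constructor <;> intro h' <;> first
            | exact absurd rfl h'
            | omega
        · push_neg at ha
          obtain ⟨ha1, ha2⟩ := ha
          simp only [if_neg (not_or.mpr ⟨ha1, ha2⟩)]
          rw [m.moves a]
          omega }
  else triv (k - 1)

/-- A pair partition as a permutation (involution) of `ℕ`. -/
def perm {k : ℕ} (m : PairPartition k) : Equiv.Perm ℕ :=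
  Function.Involutive.toPerm m.f m.invol

end PairPartition

namespace PairPartition

/-- The connected component (cycle) of the multigraph `Γ(𝔪)` containing a vertex `v`:
the orbit of `v` under the group generated by the involutions `𝔢_k` and `𝔪`. -/
def gammaOrbit {k : ℕ} (m : PairPartition k) (v : ℕ) : Set ℕ :=
  MulAction.orbit (Subgroup.closure {(triv k).perm, m.perm} : Subgroup (Equiv.Perm ℕ)) v

/-- The charge function of `Γ(𝔪)`: `charge m v` holds iff `v` receives charge `+`,
i.e. iff `v` is at even distance (in `Γ(𝔪)`) from the largest label of its cycle.
The vertices at even distance from the largest label `M` of a cycle are exactly the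
orbit of `M` under the cyclic group generated by `𝔪 ∘ 𝔢_k`. -/
def charge {k : ℕ} (m : PairPartition k) (v : ℕ) : Prop :=
  v ∈ MulAction.orbit (Subgroup.zpowers (m.perm * (triv k).perm) : Subgroup (Equiv.Perm ℕ))
        (sSup (gammaOrbit m v))

/-- The weight `ω^(b)(𝔪, (i j)·𝔪)` attached to the transposition `(i j)` acting on `𝔪`:
it is `1` if the charges of `i` and `j` in `Γ(𝔪)` agree, and `b` otherwise. -/
noncomputable def omegab {R : Type*} [CommRing R] (b : R) {k : ℕ}
    (m : PairPartition k) (i j : ℕ) : R :=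
  if (charge m i ↔ charge m j) then 1 else b

/-- The number of cycles of `Γ(𝔪)` of length `2ℓ`, i.e. the multiplicity of `ℓ`
in the coset-type `λ(𝔪)` of `𝔪`. -/
noncomputable def cycleCount {k : ℕ} (m : PairPartition k) (ℓ : ℕ) : ℕ :=
  (((Finset.Icc 1 (2 * k)).filter fun a => (gammaOrbit m a).ncard = 2 * ℓ).card) / (2 * ℓ)

/-- Two pair partitions have the same coset-type iff `Γ(𝔪)` and `Γ(𝔪')` have the same
number of cycles of every length. -/
def SameCosetType {k : ℕ} (m m' : PairPartition k) : Prop :=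
  ∀ ℓ : ℕ, cycleCount m ℓ = cycleCount m' ℓ

/-- The pair partition `𝔪` has coset-type the multiset `μ` (a partition of `k`,
presented as the multiset of its parts). -/
def HasCosetType {k : ℕ} (m : PairPartition k) (μ : Multiset ℕ) : Prop :=
  ∀ ℓ : ℕ, 1 ≤ ℓ → μ.count ℓ = cycleCount m ℓ

/-- All lists of length `n` with entries in the finset `S`. -/
def listsLen (S : Finset (ℕ × ℕ)) : ℕ → Finset (List (ℕ × ℕ))
  | 0 => {[]}
  | n + 1 => (S ×ˢ listsLen S n).image fun p => p.1 :: p.2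

/-- Apply a sequence `τ = (τ_1, …, τ_r)` of transpositions (each encoded as a pair)
to a pair partition, the rightmost transposition acting first:
`τ_1 ∘ τ_2 ∘ ⋯ ∘ τ_r · 𝔪`. -/
def applyFacts {k : ℕ} (l : List (ℕ × ℕ)) (m : PairPartition k) : PairPartition k :=
  l.foldr (fun t acc => swapAct t.1 t.2 acc) m

/-- `l` is a monotone factorisation of the pair partition `𝔪 ∈ 𝒫_k`: a sequence of
transpositions `(a_s b_s)` with `a_s < b_s`, all `b_s` odd, `b_1 ≤ b_2 ≤ ⋯ ≤ b_r`,
and `τ_1 ∘ ⋯ ∘ τ_r · 𝔪 = 𝔢_k`. -/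
def IsMonoFact {k : ℕ} (m : PairPartition k) (l : List (ℕ × ℕ)) : Prop :=
  (∀ t ∈ l, 1 ≤ t.1 ∧ t.1 < t.2 ∧ t.2 ≤ 2 * k ∧ Odd t.2) ∧
  List.Pairwise (· ≤ ·) (l.map Prod.snd) ∧
  applyFacts l m = triv k

/-- The hive number of a monotone factorisation: the number of distinct values among
`b_1, …, b_r`. -/
def hive (l : List (ℕ × ℕ)) : ℕ := (l.map Prod.snd).toFinset.card

/-- The flip number of a monotone factorisation `τ` of `𝔪`: the number of indices `s`
with `ω^(b)(𝔪^(s), τ_s · 𝔪^(s)) = b`, where `𝔪^(s) = τ_{s+1} ∘ ⋯ ∘ τ_r · 𝔪`. -/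
noncomputable def flip {k : ℕ} (m : PairPartition k) : List (ℕ × ℕ) → ℕ
  | [] => 0
  | t :: rest =>
      (if (charge (applyFacts rest m) t.1 ↔ charge (applyFacts rest m) t.2) then 0 else 1)
        + flip m rest

/-- The finset of monotone factorisations of `𝔪 ∈ 𝒫_k` of length `r`. -/
noncomputable def monoFinset {k : ℕ} (m : PairPartition k) (r : ℕ) : Finset (List (ℕ × ℕ)) :=
  (listsLen ((Finset.Icc 1 (2 * k)) ×ˢ (Finset.Icc 1 (2 * k))) r).filter fun l => IsMonoFact m l

/-- A sequence of transpositions is connected (relative to level `k`) if together with the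
involution `ι = (1 2)(3 4)⋯(2k-1 2k)` it generates a subgroup acting transitively on
`{1, …, 2k}`. -/
def IsConnectedFact (k : ℕ) (l : List (ℕ × ℕ)) : Prop :=
  ∀ a ∈ Finset.Icc 1 (2 * k), ∀ b ∈ Finset.Icc 1 (2 * k),
    ∃ σ ∈ Subgroup.closure
        ({(triv k).perm} ∪ {p : Equiv.Perm ℕ | ∃ t ∈ l, p = Equiv.swap t.1 t.2}),
      σ a = b

end PairPartition


noncomputable instance matrixMeasurableSpace {N : ℕ} :
    MeasurableSpace (Matrix (Fin N) (Fin N) ℝ) :=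
  inferInstanceAs (MeasurableSpace (Fin N → Fin N → ℝ))

/-- The compact group `O(N)` of real orthogonal `N × N` matrices. -/
abbrev OrthGroup (N : ℕ) := Matrix.orthogonalGroup (Fin N) ℝ

noncomputable instance orthMeasurableSpace {N : ℕ} : MeasurableSpace (OrthGroup N) :=
  borel _

/-- The diagonal matrix `I_{M,N}` whose first `M` diagonal entries are `1` and whose
remaining entries are `0`. -/
def IMN (N M : ℕ) : Matrix (Fin N) (Fin N) ℝ :=
  Matrix.diagonal fun p => if (p : ℕ) < M then (1 : ℝ) else 0

/-- The map `O ↦ O · I_{M,N} · Oᵀ` from `O(N)` onto the space `A(M,N)` of idempotent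
real symmetric `N × N` matrices of rank `M`. -/
def grassMap (N M : ℕ) (O : OrthGroup N) : Matrix (Fin N) (Fin N) ℝ :=
  (O : Matrix (Fin N) (Fin N) ℝ) * IMN N M * Matrix.transpose (O : Matrix (Fin N) (Fin N) ℝ)


/-- The product `A_{i(1)i(2)} A_{i(3)i(4)} ⋯ A_{i(2k-1)i(2k)}` of matrix entries. -/
def prodEntries {N : ℕ} (k : ℕ) (i : ℕ → Fin N) (A : Matrix (Fin N) (Fin N) ℝ) : ℝ :=
  ∏ a ∈ Finset.range k, A (i (2 * a + 1)) (i (2 * a + 2))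



open PairPartition


/-- A step in the (`b`- or `bt`-) Weingarten graph: a type-A edge `𝔪 → (i 2k-1)·𝔪`,
a type-B edge `𝔪 → 𝔪↓`, or a type-C edge `𝔪 → ((i 2k-1)·𝔪)↓`. -/
inductive WStep where
  | A (i : ℕ) : WStep
  | B : WStep
  | C (i : ℕ) : WStep
deriving DecidableEq

/-- `IsPathTo k 𝔪 ρ` holds iff `ρ` is a path in the `bt`-Weingarten graph from the
pair partition `𝔪 ∈ 𝒫_k` to the empty pair partition. -/
def IsPathTo : (k : ℕ) → PairPartition k → List WStep → Prop
  | 0, _, [] => True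
  | _ + 1, _, [] => False
  | 0, _, _ :: _ => False
  | k + 1, m, WStep.A i :: ρ =>
      1 ≤ i ∧ i ≤ 2 * (k + 1) - 2 ∧ IsPathTo (k + 1) (swapAct i (2 * (k + 1) - 1) m) ρ
  | k + 1, m, WStep.B :: ρ =>
      m.f (2 * (k + 1) - 1) = 2 * (k + 1) ∧ IsPathTo k (down m) ρ
  | k + 1, m, WStep.C i :: ρ =>
      1 ≤ i ∧ i ≤ 2 * (k + 1) - 2 ∧ m.f i = 2 * (k + 1) ∧
        IsPathTo k (down (swapAct i (2 * (k + 1) - 1) m)) ρ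

/-- The product of the `b`-dependent edge weights along a path. -/
noncomputable def pathWeight {R : Type*} [CommRing R] (b : R) :
    (k : ℕ) → PairPartition k → List WStep → R
  | _, _, [] => 1
  | 0, _, _ :: _ => 1
  | k + 1, m, WStep.A i :: ρ =>
      omegab b m i (2 * (k + 1) - 1) * pathWeight b (k + 1) (swapAct i (2 * (k + 1) - 1) m) ρ
  | k + 1, m, WStep.B :: ρ => pathWeight b k (down m) ρ
  | k + 1, m, WStep.C i :: ρ => pathWeight b k (down (swapAct i (2 * (k + 1) - 1) m)) ρ

/-- The number of type-A edges of a path. -/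
def countA (l : List WStep) : ℕ :=
  (l.filter fun s => match s with | WStep.A _ => true | _ => false).length

/-- The number of type-B edges of a path. -/
def countB (l : List WStep) : ℕ :=
  (l.filter fun s => match s with | WStep.B => true | _ => false).length

/-- The number of type-C edges of a path. -/
def countC (l : List WStep) : ℕ :=
  (l.filter fun s => match s with | WStep.C _ => true | _ => false).length

/-- The `b`-Weingarten function `Wg^(b)(𝔪) ∈ ℤ[b]⟦X⟧`: the coefficient of `X^n` is the
sum of `(-1)^{ℓ_A(ρ)} w(ρ)` over all paths `ρ` (with no type-C edges, i.e. paths in the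
`b`-Weingarten graph) from `𝔪` to the empty pair partition with `ℓ_A(ρ) + ℓ_B(ρ) = n`.
Here `b` is the polynomial variable of `ℤ[b]`. -/
noncomputable def WgB (k : ℕ) (m : PairPartition k) : PowerSeries (Polynomial ℤ) :=
  PowerSeries.mk fun n =>
    ∑ᶠ (ρ : List WStep)
      (_ : IsPathTo k m ρ ∧ (∀ i, WStep.C i ∉ ρ) ∧ countA ρ + countB ρ = n),
      (-1 : Polynomial ℤ) ^ countA ρ * pathWeight (Polynomial.X : Polynomial ℤ) k m ρ

/-- The `bt`-Weingarten function `Wg^(bt)(𝔪) ∈ (ℤ[b,y])⟦X⟧`: the coefficient of `X^n` is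
the sum of `(-1)^{ℓ_A(ρ)} y^{ℓ_B(ρ)} w(ρ)` over all paths `ρ` in the `bt`-Weingarten graph
from `𝔪` to the empty pair partition with `ℓ_A(ρ) + ℓ_C(ρ) = n`.  Here `b = X 0` and
`y = X 1` in `ℤ[b,y] = MvPolynomial (Fin 2) ℤ`. -/
noncomputable def WgBT (k : ℕ) (m : PairPartition k) :
    PowerSeries (MvPolynomial (Fin 2) ℤ) :=
  PowerSeries.mk fun n =>
    ∑ᶠ (ρ : List WStep) (_ : IsPathTo k m ρ ∧ countA ρ + countC ρ = n),
      (-1 : MvPolynomial (Fin 2) ℤ) ^ countA ρ * (MvPolynomial.X 1) ^ countB ρ *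
        pathWeight (MvPolynomial.X 0 : MvPolynomial (Fin 2) ℤ) k m ρ

/-- The standard basis vector `𝔪` of the free module with basis `𝒫_k`,
realised as functions `𝒫_k → R`. -/
noncomputable def basisVec {R : Type*} [CommRing R] (k : ℕ) (m : PairPartition k) :
    PairPartition k → R :=
  fun n => if n = m then 1 else 0

/-- The `b`-deformed Jucys–Murphy operator `𝒥_i` acting on the free module with basis
`𝒫_k` (realised as functions `𝒫_k → R`): on basis vectors,
`𝒥_i(𝔪) = ∑_{a=1}^{2i-2} ω^(b)((a 2i-1)·𝔪, 𝔪) · (a 2i-1)·𝔪`. -/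
noncomputable def JbOp {R : Type*} [CommRing R] (b : R) {k : ℕ} (i : ℕ)
    (v : PairPartition k → R) : PairPartition k → R :=
  fun n => ∑ a ∈ Finset.Icc 1 (2 * i - 2),
    omegab b n a (2 * i - 1) * v (swapAct a (2 * i - 1) n)

/-- The (odd) Jucys–Murphy element `J_{2i-1} = ∑_{a=1}^{2i-2} (a
 2i-1)` of the group
algebra of `S_{2k}`, acting on the free module with basis `𝒫_k` via the linear extension
of the `S_{2k}`-action on pair partitions. -/
noncomputable def JoddOp {R : Type*} [CommRing R] {k : ℕ} (i : ℕ)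
    (v : PairPartition k → R) : PairPartition k → R :=
  fun n => ∑ a ∈ Finset.Icc 1 (2 * i - 2), v (swapAct a (2 * i - 1) n)

/-- The vector `𝔭_μ = ∑_{𝔪 : λ(𝔪) = μ} 𝔪`, i.e. the indicator function of the set of
pair partitions of coset-type `μ`. -/
noncomputable def pVec {R : Type*} [CommRing R] (k : ℕ) (μ : Multiset ℕ) :
    PairPartition k → R :=
  fun m => if HasCosetType m μ then 1 else 0

noncomputable def applyPows {R : Type*} [CommRing R] (b : R) {k : ℕ} :
    List (ℕ × ℕ) → (PairPartition k → R) → (PairPartition k → R)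
  | [], v => v
  | ia :: rest, v => (JbOp b ia.1)^[ia.2] (applyPows b rest v)


/-- The coefficient ring `ℤ[b,y]⟦X⟧`, with `b = X 0` and `y = X 1`. -/
abbrev SeriesRing := PowerSeries (MvPolynomial (Fin 2) ℤ)

noncomputable def bS : SeriesRing := PowerSeries.C (MvPolynomial.X 0)
noncomputable def yS : SeriesRing := PowerSeries.C (MvPolynomial.X 1)

/-- The operator-valued power series `(1 + X·𝒥_i)⁻¹ = ∑_{j ≥ 0} (-X)^j 𝒥_i^j`
applied to a vector `v`, computed coefficientwise. -/
noncomputable def invApply (k : ℕ) (i : ℕ) (v : PairPartition k → SeriesRing) :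
    PairPartition k → SeriesRing :=
  fun n => PowerSeries.mk fun d =>
    ∑ᶠ j : ℕ, PowerSeries.coeff d
      ((-(PowerSeries.X : SeriesRing)) ^ j * ((JbOp bS i)^[j] v) n)

/-- The vector `(y + X𝒥_j)(1 + X𝒥_j)⁻¹ ⋯ (y + X𝒥_1)(1 + X𝒥_1)⁻¹ (𝔢_k)`. -/
noncomputable def prodVec (k : ℕ) : ℕ → (PairPartition k → SeriesRing)
  | 0 => fun n => if n = triv k then 1 else 0
  | j + 1 => fun n =>
      yS * invApply k (j + 1) (prodVec k j) n +
        PowerSeries.X * (JbOp bS (j + 1) (invApply k (j + 1) (prodVec k j))) n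


open MvPolynomial

/-- The formal partial derivative `∂_n = ∂/∂p_n` on the polynomial ring
`K[p_1, p_2, …]` (the variables being indexed by positive naturals);
junk value `0` for `n = 0`. -/
noncomputable def pd (K : Type*) [CommRing K] (n : ℕ) :
    MvPolynomial ℕ+ K →ₗ[K] MvPolynomial ℕ+ K :=
  if h : 0 < n then (pderiv (⟨n, h⟩ : ℕ+)).toLinearMap else 0

/-- The variable `p_n` of `K[p_1, p_2, …]`; junk value `0` for `n = 0`. -/
noncomputable def pvar (K : Type*) [CommRing K] (n : ℕ) : MvPolynomial ℕ+ K :=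
  if h : 0 < n then X ⟨n, h⟩ else 0

section SumOp

variable (K : Type*) [CommRing K]

lemma sumOp_support_subset (m : ℕ) (f : MvPolynomial ℕ+ K) :
    (Function.support fun i => ((i + m : ℕ) : K) • (pvar K i * pd K (i + m) f)) ⊆
      ((fun i => i + m) ⁻¹' ↑(f.vars.image (fun v : ℕ+ => (v : ℕ)))) := by
  intro i hi
  simp only [Function.mem_support] at hi
  by_contra hmem
  apply hi
  rcases Nat.eq_zero_or_pos (i + m) with h0 | h0
  · have hi0 : i = 0 := by omega
    subst hi0
    simp [pvar]
  · have hnot : (⟨i + m, h0⟩ : ℕ+) ∉ f.vars := by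
      intro hv
      apply hmem
      simp only [Set.mem_preimage, Finset.coe_image, Set.mem_image, Finset.mem_coe]
      exact ⟨⟨i + m, h0⟩, hv, rfl⟩
    have hz : pd K (i + m) f = 0 := by
      have hp := pderiv_eq_zero_of_notMem_vars (R := K) hnot
      unfold pd
      first
        | exact (congrArg (fun g => g f) (dif_pos h0)).trans hp
        | (erw [dif_pos h0]; exact hp)
        | (simp only [h0, dite_true]; exact hp)
    rw [hz, mul_zero, smul_zero]

lemma sumOp_support_finite (m : ℕ) (f : MvPolynomial ℕ+ K) :
    (Function.support fun i => ((i + m : ℕ) : K) • (pvar K i * pd K (i + m) f)).Finite := by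
  apply Set.Finite.subset _ (sumOp_support_subset K m f)
  apply Set.Finite.preimage
  · exact (add_left_injective m).injOn
  · exact (f.vars.image (fun v : ℕ+ => (v : ℕ))).finite_toSet

/-- The operator `∑_{i ≥ 1} (i+m) p_i ∂_{i+m}` on `K[p_1, p_2, …]`
(a well-defined linear operator, the sum being locally finite on polynomials). -/
noncomputable def sumOp (m : ℕ) : MvPolynomial ℕ+ K →ₗ[K] MvPolynomial ℕ+ K where
  toFun f := ∑ᶠ i : ℕ, ((i + m : ℕ) : K) • (pvar K i * pd K (i + m) f)
  map_add' x y := by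
    have key : ∀ i : ℕ, ((i + m : ℕ) : K) • (pvar K i * pd K (i + m) (x + y)) =
        ((i + m : ℕ) : K) • (pvar K i * pd K (i + m) x) +
          ((i + m : ℕ) : K) • (pvar K i * pd K (i + m) y) := by
      intro i
      rw [map_add, mul_add, smul_add]
    try dsimp only
    rw [finsum_congr key]
    exact finsum_add_distrib (sumOp_support_finite K m x) (sumOp_support_finite K m y)
  map_smul' c x := by
    have key : ∀ i : ℕ, ((i + m : ℕ) : K) • (pvar K i * pd K (i + m) (c • x)) =
        c • (((i + m : ℕ) : K) • (pvar K i * pd K (i + m) x)) := by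
      intro i
      rw [_root_.map_smul, smul_comm]
      congr 1
      rw [mul_smul_comm]
    try dsimp only
    rw [finsum_congr key]
    simp only [RingHom.id_apply]
    exact (smul_finsum' c (sumOp_support_finite K m x)).symm
end SumOp

/-- The `bt`-deformed Virasoro-type operator `L_m` of Theorem 3.5/4.7, acting on the
polynomial ring `K[p_1, p_2, …]`. -/
noncomputable def Lop (K : Type*) [CommRing K] (b t z hbar : K) (m : ℕ) :
    MvPolynomial ℕ+ K →ₗ[K] MvPolynomial ℕ+ K :=
  (((m : K) * Ring.inverse hbar) • pd K m)
    - (1 + b) • (∑ i ∈ Finset.Ioo 0 m,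
        (((i : ℕ) : K) * (((m - i : ℕ)) : K)) • (pd K i ∘ₗ pd K (m - i)))
    - sumOp K m
    - ((b * (m : K) * ((m - 1 : ℕ) : K)) • pd K m)
    - ((z * Ring.inverse hbar * (t - 1) * ((m - 1 : ℕ) : K)) • pd K (m - 1))
    - (if m = 1 then (z * Ring.inverse hbar * Ring.inverse hbar * Ring.inverse (1 + b)) •
        (LinearMap.id : MvPolynomial ℕ+ K →ₗ[K] MvPolynomial ℕ+ K) else 0)
open PairPartition

/-- `i : {1,…,2k} → {1,…,N}` is admissible for `𝔪`: `{a,b} ∈ 𝔪` implies `i a = i b`. -/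
def Admissible {N : ℕ} (k : ℕ) (m : PairPartition k) (i : ℕ → Fin N) : Prop :=
  ∀ a, 1 ≤ a → a ≤ 2 * k → i (m.f a) = i a

/-- `i : {1,…,2k} → {1,…,N}` is strongly admissible for `𝔪`:
for `a, b ∈ {1,…,2k}`, `i a = i b` holds iff `a = b` or `{a,b} ∈ 𝔪`. -/
def StronglyAdmissible {N : ℕ} (k : ℕ) (m : PairPartition k) (i : ℕ → Fin N) : Prop :=
  ∀ a b, 1 ≤ a → a ≤ 2 * k → 1 ≤ b → b ≤ 2 * k → (i a = i b ↔ (a = b ∨ m.f a = b))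

/-- `ĥ^{(t)}_r(𝔪)` evaluated at a real number `t`: the weighted count
`∑_{τ ∈ Mono(𝔪), ℓ(τ) = r} t^{hive(τ)}`. -/
noncomputable def hiveSum {k : ℕ} (m : PairPartition k) (r : ℕ) (t : ℝ) : ℝ :=
  ∑ l ∈ monoFinset m r, t ^ hive l

/-- The `bt`-monotone count `∑_{τ ∈ Mono(𝔪), ℓ(τ) = r} b^{flip(τ)} t^{hive(τ)}`
in `ℤ[b,t]`, with `b = X 0` and `t = X 1`. -/
noncomputable def btSum {k : ℕ} (m : PairPartition k) (r : ℕ) : MvPolynomial (Fin 2) ℤ :=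
  ∑ l ∈ monoFinset m r,
    (MvPolynomial.X 0 : MvPolynomial (Fin 2) ℤ) ^ (flip m l) *
      (MvPolynomial.X 1) ^ (hive l)

/-- The connected `bt`-monotone count
`∑_{τ ∈ CMono(𝔪), ℓ(τ) = r} b^{flip(τ)} t^{hive(τ)}` in `ℚ[b,t]`,
with `b = X 0` and `t = X 1`. -/
noncomputable def cMonoSum {k : ℕ} (m : PairPartition k) (r : ℕ) : MvPolynomial (Fin 2) ℚ :=
  ∑ l ∈ (monoFinset m r).filter (fun l => IsConnectedFact k l),
    (MvPolynomial.X 0 : MvPolynomial (Fin 2) ℚ) ^ (flip m l) *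
      (MvPolynomial.X 1) ^ (hive l)

/-- The operator `c + J_{2i-1}` on the free module with basis `𝒫_k`. -/
noncomputable def affJoddOp {k : ℕ} (c : ℝ) (i : ℕ) (v : PairPartition k → ℝ) :
    PairPartition k → ℝ :=
  fun n => c * v n + JoddOp i v n

section Expansion
open PairPartition Finset

variable {R : Type*} [CommRing R]

lemma mem_listsLen {S : Finset (ℕ × ℕ)} : ∀ {n : ℕ} {l : List (ℕ × ℕ)},
    l ∈ listsLen S n ↔ l.length = n ∧ ∀ t ∈ l, t ∈ S := by
  intro n
  induction n with
  | zero =>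
    intro l
    simp only [listsLen, Finset.mem_singleton]
    constructor
    · rintro rfl; simp
    · rintro ⟨h, -⟩; exact List.length_eq_zero_iff.1 h
  | succ n ih =>
    intro l
    simp only [listsLen, Finset.mem_image, Finset.mem_product]
    constructor
    · rintro ⟨⟨t, l'⟩, ⟨ht, hl'⟩, rfl⟩
      obtain ⟨h1, h2⟩ := ih.1 hl'
      refine ⟨by simp [h1], ?_⟩
      intro u hu
      rcases List.mem_cons.1 hu with rfl | hu
      · exact ht
      · exact h2 u hu
    · rintro ⟨hlen, hmem⟩
      match l with
      | [] => simp at hlen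
      | t :: l' =>
        exact ⟨(t, l'), ⟨hmem t (by simp),
          ih.2 ⟨by simpa using hlen, fun u hu => hmem u (List.mem_cons_of_mem _ hu)⟩⟩, rfl⟩

lemma applyFacts_nil {k : ℕ} (m : PairPartition k) : applyFacts [] m = m := rfl

lemma applyFacts_cons {k : ℕ} (t : ℕ × ℕ) (l : List (ℕ × ℕ)) (m : PairPartition k) :
    applyFacts (t :: l) m = swapAct t.1 t.2 (applyFacts l m) := rfl

lemma applyFacts_append {k : ℕ} (l₁ l₂ : List (ℕ × ℕ)) (m : PairPartition k) :
    applyFacts (l₁ ++ l₂) m = applyFacts l₁ (applyFacts l₂ m) := by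
  unfold applyFacts
  rw [List.foldr_append]

lemma flip_nil {k : ℕ} (m : PairPartition k) : flip m [] = 0 := rfl

lemma flip_cons {k : ℕ} (m : PairPartition k) (t : ℕ × ℕ) (l : List (ℕ × ℕ)) :
    flip m (t :: l) =
      (if (charge (applyFacts l m) t.1 ↔ charge (applyFacts l m) t.2) then 0 else 1)
        + flip m l := rfl

lemma flip_append {k : ℕ} (m : PairPartition k) (l₁ l₂ : List (ℕ × ℕ)) :
    flip m (l₁ ++ l₂) = flip (applyFacts l₂ m) l₁ + flip m l₂ := by
  induction l₁ with
  | nil => simp [flip_nil]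
  | cons t l ih =>
    rw [List.cons_append, flip_cons, flip_cons, ih, applyFacts_append, add_assoc]

/-- The finset of allowed transpositions for the `i`-th JM operator. -/
def blockFS (i : ℕ) : Finset (ℕ × ℕ) := (Finset.Icc 1 (2*i-2)).image fun x => (x, 2*i-1)

lemma jbop_iterate (b : R) {k : ℕ} (i : ℕ) :
    ∀ (a : ℕ) (v : PairPartition k → R) (n : PairPartition k),
    ((JbOp b i)^[a] v) n = ∑ l ∈ listsLen (blockFS i) a, b ^ flip n l * v (applyFacts l n) := by
  intro a
  induction a with
  | zero =>
    intro v n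
    simp [listsLen, flip_nil, applyFacts]
  | succ a ih =>
    intro v n
    rw [Function.iterate_succ_apply, ih]
    have himg : listsLen (blockFS i) (a+1)
        = ((blockFS i) ×ˢ listsLen (blockFS i) a).image fun p => p.1 :: p.2 := rfl
    rw [himg, Finset.sum_image (by
      rintro ⟨t, l⟩ - ⟨t', l'⟩ - h
      simp only [List.cons.injEq] at h
      exact Prod.ext_iff.2 h), Finset.sum_product]
    simp only [blockFS]
    rw [Finset.sum_image (by intro x _ y _ h; simpa using h)]
    simp only [JbOp, Finset.mul_sum]
    rw [Finset.sum_comm]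
    refine Finset.sum_congr rfl fun x hx => ?_
    refine Finset.sum_congr rfl fun l hl => ?_
    rw [applyFacts_cons, flip_cons]
    by_cases h : charge (applyFacts l n) x ↔ charge (applyFacts l n) (2 * i - 1)
    · rw [if_pos h]
      simp only [omegab, if_pos h]
      ring
    · rw [if_neg h]
      simp only [omegab, if_neg h]
      rw [pow_add, pow_one]
      ring
end Expansion

section BlockLists
open PairPartition Finset

variable {R : Type*} [CommRing R]

def blockLists : List (ℕ × ℕ) → Finset (List (ℕ × ℕ))
  | [] => {[]}
  | ia :: rest => ((listsLen (blockFS ia.1) ia.2) ×ˢ blockLists rest).image fun q => q.2 ++ q.1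

lemma applyPows_expand (b : R) {k : ℕ} :
    ∀ (L : List (ℕ × ℕ)) (v : PairPartition k → R) (n : PairPartition k),
    applyPows b L v n = ∑ l ∈ blockLists L, b ^ flip n l * v (applyFacts l n) := by
  intro L
  induction L with
  | nil => intro v n; simp [applyPows, blockLists, flip_nil, applyFacts]
  | cons ia rest ih =>
    intro v n
    show ((JbOp b ia.1)^[ia.2] (applyPows b rest v)) n = _
    rw [jbop_iterate]
    have hinj : ∀ q ∈ (listsLen (blockFS ia.1) ia.2) ×ˢ blockLists rest,
        ∀ q' ∈ (listsLen (blockFS ia.1) ia.2) ×ˢ blockLists rest,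
        q.2 ++ q.1 = q'.2 ++ q'.1 → q = q' := by
      rintro ⟨l₁, l₂⟩ hq ⟨l₁', l₂'⟩ hq' h
      simp only [Finset.mem_product] at hq hq'
      have h1 : l₁.length = l₁'.length := by
        rw [(mem_listsLen.1 hq.1).1, (mem_listsLen.1 hq'.1).1]
      obtain ⟨h2, h3⟩ := List.append_inj' h h1
      exact Prod.ext_iff.2 ⟨h3, h2⟩
    rw [show blockLists (ia :: rest)
        = ((listsLen (blockFS ia.1) ia.2) ×ˢ blockLists rest).image (fun q => q.2 ++ q.1) from rfl,
      Finset.sum_image hinj, Finset.sum_product]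
    refine Finset.sum_congr rfl fun l₁ hl₁ => ?_
    rw [ih, Finset.mul_sum]
    refine Finset.sum_congr rfl fun l₂ hl₂ => ?_
    rw [flip_append, applyFacts_append, pow_add]
    ring
end BlockLists
section RLE
open PairPartition Finset

/-- Expansion of a run-length encoding. -/
def rleExp (L : List (ℕ × ℕ)) : List ℕ := (L.map fun q => List.replicate q.2 q.1).flatten

lemma rleExp_nil : rleExp [] = [] := rfl

lemma rleExp_cons (q : ℕ × ℕ) (L : List (ℕ × ℕ)) :
    rleExp (q :: L) = List.replicate q.2 q.1 ++ rleExp L := rfl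

lemma rleExp_append (A B : List (ℕ × ℕ)) : rleExp (A ++ B) = rleExp A ++ rleExp B := by
  simp [rleExp]

lemma mem_rleExp {L : List (ℕ × ℕ)} {x : ℕ} (h : x ∈ rleExp L) : x ∈ L.map Prod.fst := by
  rw [rleExp, List.mem_flatten] at h
  obtain ⟨l, hl, hx⟩ := h
  obtain ⟨q, hq, rfl⟩ := List.mem_map.1 hl
  exact List.mem_map.2 ⟨q, hq, (List.eq_of_mem_replicate hx).symm⟩

lemma length_rleExp (L : List (ℕ × ℕ)) : (rleExp L).length = (L.map Prod.snd).sum := by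
  induction L with
  | nil => rfl
  | cons q L ih => simp [rleExp_cons, ih]

lemma sorted_replicate_le (n x : ℕ) : List.Pairwise (· ≤ ·) (List.replicate n x) :=
  List.pairwise_replicate.2 (Or.inr le_rfl)

lemma sorted_rleExp {L : List (ℕ × ℕ)} (h : List.Pairwise (· ≤ ·) (L.map Prod.fst)) :
    List.Pairwise (· ≤ ·) (rleExp L) := by
  induction L with
  | nil => simp [rleExp_nil]
  | cons q L ih =>
    rw [List.map_cons, List.pairwise_cons] at h
    rw [rleExp_cons]
    refine (List.pairwise_append).2 ⟨sorted_replicate_le _ _, ih h.2, ?_⟩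
    intro x hx z hz
    rw [List.eq_of_mem_replicate hx]
    exact h.1 _ (mem_rleExp hz)

lemma toFinset_rleExp {L : List (ℕ × ℕ)} (h : ∀ q ∈ L, 1 ≤ q.2) :
    (rleExp L).toFinset = (L.map Prod.fst).toFinset := by
  induction L with
  | nil => simp [rleExp_nil]
  | cons q L ih =>
    have h1 : q.2 ≠ 0 := by have := h q (by simp); omega
    rw [rleExp_cons, List.toFinset_append, List.toFinset_replicate_of_ne_zero h1,
      List.map_cons, List.toFinset_cons,
      ih (fun p hp => h p (List.mem_cons_of_mem _ hp))]
    ext x; simp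

lemma count_rleExp_eq_zero {L : List (ℕ × ℕ)} {x : ℕ} (h : x ∉ L.map Prod.fst) :
    List.count x (rleExp L) = 0 :=
  List.count_eq_zero.2 fun hx => h (mem_rleExp hx)

lemma rle_unique : ∀ (L₁ L₂ : List (ℕ × ℕ)), List.Pairwise (· < ·) (L₁.map Prod.fst) →
    List.Pairwise (· < ·) (L₂.map Prod.fst) → (∀ q ∈ L₁, 1 ≤ q.2) → (∀ q ∈ L₂, 1 ≤ q.2) →
    rleExp L₁ = rleExp L₂ → L₁ = L₂ := by
  intro L₁
  induction L₁ with
  | nil =>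
    intro L₂ _ _ _ h2 he
    cases L₂ with
    | nil => rfl
    | cons q L =>
      exfalso
      have h0 : q.2 ≠ 0 := by have := h2 q (by simp); omega
      have : (rleExp (q :: L)).length ≠ 0 := by
        rw [rleExp_cons]
        simp [h0]
      rw [← he] at this
      simp [rleExp_nil] at this
  | cons p L₁' ih =>
    intro L₂ h1 h2 hp1 hp2 he
    cases L₂ with
    | nil =>
      exfalso
      have h0 : p.2 ≠ 0 := by have := hp1 p (by simp); omega
      have : (rleExp (p :: L₁')).length ≠ 0 := by
        rw [rleExp_cons]; simp [h0]
      rw [he] at this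
      simp [rleExp_nil] at this
    | cons q L₂' =>
      obtain ⟨a, ha⟩ : ∃ a, p.2 = a + 1 := ⟨p.2 - 1, by have := hp1 p (by simp); omega⟩
      obtain ⟨c, hc⟩ : ∃ c, q.2 = c + 1 := ⟨q.2 - 1, by have := hp2 q (by simp); omega⟩
      have he' : p.1 :: (List.replicate a p.1 ++ rleExp L₁')
          = q.1 :: (List.replicate c q.1 ++ rleExp L₂') := by
        rw [← List.cons_append, ← List.replicate_succ, ← ha,
          ← List.cons_append, ← List.replicate_succ, ← hc, ← rleExp_cons, ← rleExp_cons, he]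
      have hv : p.1 = q.1 := by injection he'
      have hnm1 : p.1 ∉ L₁'.map Prod.fst := by
        rw [List.map_cons, List.pairwise_cons] at h1
        intro hmem
        exact absurd (h1.1 _ hmem) (lt_irrefl _)
      have hnm2 : q.1 ∉ L₂'.map Prod.fst := by
        rw [List.map_cons, List.pairwise_cons] at h2
        intro hmem
        exact absurd (h2.1 _ hmem) (lt_irrefl _)
      have hcnt : p.2 = q.2 := by
        have c1 : List.count p.1 (rleExp (p :: L₁')) = p.2 := by
          rw [rleExp_cons, List.count_append, List.count_replicate_self,
            count_rleExp_eq_zero hnm1, add_zero]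
        have c2 : List.count q.1 (rleExp (q :: L₂')) = q.2 := by
          rw [rleExp_cons, List.count_append, List.count_replicate_self,
            count_rleExp_eq_zero hnm2, add_zero]
        rw [← c1, ← c2, he, hv]
      have hac : a = c := by omega
      have htail : rleExp L₁' = rleExp L₂' := by
        have h3 := (List.cons.inj he').2
        rw [← hv, ← hac] at h3
        exact List.append_cancel_left h3
      have hL : L₁' = L₂' := by
        rw [List.map_cons, List.pairwise_cons] at h1 h2
        exact ih L₂' h1.2 h2.2 (fun q hq => hp1 q (List.mem_cons_of_mem _ hq))
          (fun q hq => hp2 q (List.mem_cons_of_mem _ hq)) htail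
      rw [hL, Prod.ext_iff.2 ⟨hv, hcnt⟩]
end RLE
section Decomp
open PairPartition Finset

/-- The `(value, count)` run list associated to a `(index, power)` list. -/
def runOf (M : List (ℕ × ℕ)) : List (ℕ × ℕ) := (M.map fun ia => (2*ia.1-1, ia.2)).reverse

lemma mem_blockLists_iff : ∀ (M : List (ℕ × ℕ)) (l : List (ℕ × ℕ)),
    l ∈ blockLists M ↔
      (l.map Prod.snd = rleExp (runOf M) ∧ ∀ t ∈ l, 1 ≤ t.1 ∧ t.1 ≤ t.2 - 1) := by
  intro M
  induction M with
  | nil =>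
    intro l
    simp only [blockLists, Finset.mem_singleton, runOf, List.map_nil, List.reverse_nil,
      rleExp_nil, List.map_eq_nil_iff]
    constructor
    · rintro rfl; simp
    · rintro ⟨rfl, -⟩; rfl
  | cons ia M' ih =>
    intro l
    have hrun : rleExp (runOf (ia :: M'))
        = rleExp (runOf M') ++ List.replicate ia.2 (2*ia.1-1) := by
      rw [runOf, List.map_cons, List.reverse_cons, rleExp_append, ← runOf]
      simp [rleExp_cons, rleExp_nil]
    rw [hrun]
    constructor
    · intro hl
      obtain ⟨⟨l₁, l₂⟩, hq, rfl⟩ := Finset.mem_image.1 hl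
      obtain ⟨hq1, hq2⟩ := Finset.mem_product.1 hq
      obtain ⟨hq1len, hq1mem⟩ := mem_listsLen.1 hq1
      obtain ⟨ih1, ih2⟩ := (ih l₂).1 hq2
      have hsnd1 : ∀ t ∈ l₁, t.2 = 2*ia.1-1 ∧ 1 ≤ t.1 ∧ t.1 ≤ 2*ia.1-2 := by
        intro t ht
        obtain ⟨x, hx, rfl⟩ := Finset.mem_image.1 (hq1mem t ht)
        rw [Finset.mem_Icc] at hx
        exact ⟨rfl, hx.1, hx.2⟩
      constructor
      · rw [List.map_append, ih1]
        congr 1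
        have : ∀ z ∈ l₁.map Prod.snd, z = 2*ia.1-1 := by
          intro z hz
          obtain ⟨t, ht, rfl⟩ := List.mem_map.1 hz
          exact (hsnd1 t ht).1
        rw [List.eq_replicate_of_mem this, List.length_map, hq1len]
      · intro t ht
        rcases List.mem_append.1 ht with ht | ht
        · exact ih2 t ht
        · obtain ⟨h1, h2, h3⟩ := hsnd1 t ht
          refine ⟨h2, ?_⟩
          omega
    · rintro ⟨hsnd, hent⟩
      have hlen : l.length = (rleExp (runOf M')).length + ia.2 := by
        have := congrArg List.length hsnd
        simpa using this
      set nn := (rleExp (runOf M')).length with hnn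
      refine Finset.mem_image.2 ⟨(l.drop nn, l.take nn), Finset.mem_product.2 ⟨?_, ?_⟩,
        List.take_append_drop nn l⟩
      · refine mem_listsLen.2 ⟨by simp [hlen], ?_⟩
        intro t ht
        have htl : t ∈ l := List.mem_of_mem_drop ht
        have hsndt : t.2 = 2*ia.1-1 := by
          have : t.2 ∈ (l.drop nn).map Prod.snd := List.mem_map.2 ⟨t, ht, rfl⟩
          rw [List.map_drop, hsnd, hnn] at this
          rw [List.drop_left] at this
          exact List.eq_of_mem_replicate this
        obtain ⟨e1, e2⟩ := hent t htl
        refine Finset.mem_image.2 ⟨t.1, Finset.mem_Icc.2 ⟨e1, by omega⟩, ?_⟩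
        rw [← hsndt]
      · refine (ih _).2 ⟨?_, fun t ht => hent t (List.mem_of_mem_take ht)⟩
        rw [List.map_take, hsnd, hnn, List.take_left]
end Decomp
section RunDecomp
open PairPartition

lemma run_decomp : ∀ (N : ℕ) (bs : List ℕ), bs.length ≤ N → List.Pairwise (· ≤ ·) bs →
    ∃ L : List (ℕ × ℕ), List.Pairwise (· < ·) (L.map Prod.fst) ∧ (∀ q ∈ L, 1 ≤ q.2) ∧
      rleExp L = bs ∧ (L.map Prod.fst).toFinset = bs.toFinset ∧
      (L.map Prod.snd).sum = bs.length := by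
  intro N
  induction N with
  | zero =>
    intro bs hlen _
    have hb : bs = [] := List.length_eq_zero_iff.1 (Nat.le_zero.1 hlen)
    subst hb
    exact ⟨[], by simp, by simp, rfl, by simp, by simp⟩
  | succ N ih =>
    intro bs hlen hsort
    cases bs with
    | nil => exact ⟨[], by simp, by simp, rfl, by simp, by simp⟩
    | cons y t =>
      set P : ℕ → Bool := fun x => decide (x = y) with hP
      set tk := (y :: t).takeWhile P with htkdef
      set dk := (y :: t).dropWhile P with hdkdef
      have htkdk : tk ++ dk = y :: t := List.takeWhile_append_dropWhile
      have htk_all : ∀ x ∈ tk, x = y := by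
        intro x hx
        have := List.mem_takeWhile_imp hx
        rw [hP] at this
        exact of_decide_eq_true this
      have htk_rep : tk = List.replicate tk.length y := List.eq_replicate_of_mem htk_all
      have htk_len : 1 ≤ tk.length := by
        have : tk = y :: t.takeWhile P := by
          rw [htkdef, List.takeWhile_cons_of_pos (by simp [hP])]
        rw [this]
        simp
      have hlen2 : tk.length + dk.length = t.length + 1 := by
        have := congrArg List.length htkdk
        simpa using this
      have hdkN : dk.length ≤ N := by
        have : (y :: t).length ≤ N + 1 := hlen
        simp at this
        omega
      have hdk_sorted : List.Pairwise (· ≤ ·) dk :=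
        List.Pairwise.sublist (List.dropWhile_sublist P) hsort
      have hy_le : ∀ z ∈ dk, y ≤ z := by
        intro z hz
        have hzmem : z ∈ y :: t := List.Sublist.mem hz (List.dropWhile_sublist P)
        rcases List.mem_cons.1 hzmem with rfl | hzm
        · exact le_rfl
        · exact (List.pairwise_cons.1 hsort).1 z hzm
      have hgt : ∀ z ∈ dk, y < z := by
        intro z hz
        have hne : dk ≠ [] := List.ne_nil_of_mem hz
        have h0 : P (dk.head hne) = false := List.head_dropWhile_not P (l := y :: t) hne
        have hh1 : dk.head hne ≠ y := by simpa [hP] using h0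
        have hh2 : y < dk.head hne := by
          have := hy_le _ (List.head_mem hne)
          omega
        have hcons : dk.head hne :: dk.tail = dk := List.cons_head_tail hne
        have hsc : List.Pairwise (· ≤ ·) (dk.head hne :: dk.tail) := by
          rw [hcons]; exact hdk_sorted
        rcases List.mem_cons.1 (hcons.symm ▸ hz) with h | h
        · omega
        · have := (List.pairwise_cons.1 hsc).1 z h
          omega
      obtain ⟨L', hs', hc', he', hf', hsum'⟩ := ih dk hdkN hdk_sorted
      refine ⟨(y, tk.length) :: L', ?_, ?_, ?_, ?_, ?_⟩
      · rw [List.map_cons, List.pairwise_cons]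
        refine ⟨?_, hs'⟩
        intro v hv
        have : v ∈ dk.toFinset := by
          rw [← hf']
          exact List.mem_toFinset.2 hv
        exact hgt v (List.mem_toFinset.1 this)
      · intro q hq
        rcases List.mem_cons.1 hq with rfl | hq
        · exact htk_len
        · exact hc' q hq
      · rw [rleExp_cons, he']
        rw [← htk_rep] at *
        exact htkdk
      · rw [List.map_cons, List.toFinset_cons, hf']
        rw [← htkdk, htk_rep, List.toFinset_append,
          List.toFinset_replicate_of_ne_zero (by omega)]
        ext x; simp
      · rw [List.map_cons, List.sum_cons, hsum']
        simp only [List.length_cons]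
        omega
end RunDecomp
section Glue
open PairPartition Finset

/-- The condition defining admissible index/power pairs. -/
def cnd (k r : ℕ) (p : List ℕ × List ℕ) : Prop :=
  List.Pairwise (· > ·) p.1 ∧ (∀ i ∈ p.1, 1 ≤ i ∧ i ≤ k) ∧
    p.1.length = p.2.length ∧ (∀ a ∈ p.2, 1 ≤ a) ∧ p.2.sum = r

lemma runOf_fst (M : List (ℕ × ℕ)) :
    (runOf M).map Prod.fst = ((M.map Prod.fst).map (fun i => 2*i-1)).reverse := by
  simp [runOf, List.map_reverse, List.map_map, Function.comp]

lemma runOf_snd (M : List (ℕ × ℕ)) :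
    (runOf M).map Prod.snd = (M.map Prod.snd).reverse := by
  simp [runOf, List.map_reverse, List.map_map, Function.comp]

lemma sorted_runOf {k r : ℕ} {p : List ℕ × List ℕ} (hc : cnd k r p) :
    List.Pairwise (· < ·) ((runOf (p.1.zip p.2)).map Prod.fst) := by
  obtain ⟨hc1, -, hc3, -, -⟩ := hc
  rw [runOf_fst, List.map_fst_zip (le_of_eq hc3)]
  refine List.pairwise_reverse.2 ?_
  refine List.pairwise_map.2 ?_
  refine List.Pairwise.imp ?_ hc1
  intro a b hab
  omega

lemma counts_runOf {k r : ℕ} {p : List ℕ × List ℕ} (hc : cnd k r p) :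
    ∀ q ∈ runOf (p.1.zip p.2), 1 ≤ q.2 := by
  obtain ⟨-, -, hc3, hc4, -⟩ := hc
  intro q hq
  have h : q.2 ∈ (runOf (p.1.zip p.2)).map Prod.snd := List.mem_map.2 ⟨q, hq, rfl⟩
  rw [runOf_snd, List.mem_reverse, List.map_snd_zip (ge_of_eq hc3)] at h
  exact hc4 _ h

lemma block_to_mono {k r : ℕ} {p : List ℕ × List ℕ} (hc : cnd k r p) {n : PairPartition k}
    {l : List (ℕ × ℕ)} (hl : l ∈ blockLists (p.1.zip p.2)) (htriv : applyFacts l n = triv k) :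
    l ∈ monoFinset n r ∧ hive l = p.1.length := by
  obtain ⟨hsnd, hent⟩ := (mem_blockLists_iff (p.1.zip p.2) l).1 hl
  obtain ⟨hc1, hc2, hc3, hc4, hc5⟩ := hc
  have hfst : (p.1.zip p.2).map Prod.fst = p.1 := List.map_fst_zip (le_of_eq hc3)
  have hsndM : (p.1.zip p.2).map Prod.snd = p.2 := List.map_snd_zip (ge_of_eq hc3)
  have hval : ∀ z ∈ l.map Prod.snd, ∃ i ∈ p.1, z = 2*i-1 := by
    intro z hz
    rw [hsnd] at hz
    have h := mem_rleExp hz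
    rw [runOf_fst, List.mem_reverse, hfst] at h
    obtain ⟨i, hi, rfl⟩ := List.mem_map.1 h
    exact ⟨i, hi, rfl⟩
  have hentry : ∀ t ∈ l, 1 ≤ t.1 ∧ t.1 < t.2 ∧ t.2 ≤ 2*k ∧ Odd t.2 := by
    intro t ht
    obtain ⟨e1, e2⟩ := hent t ht
    obtain ⟨i, hip, hiz⟩ := hval t.2 (List.mem_map.2 ⟨t, ht, rfl⟩)
    obtain ⟨hi1, hik⟩ := hc2 i hip
    exact ⟨e1, by omega, by omega, ⟨i - 1, by omega⟩⟩
  have hsorted : List.Pairwise (· ≤ ·) (l.map Prod.snd) := by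
    rw [hsnd]
    exact sorted_rleExp (List.Pairwise.imp (fun h => le_of_lt h)
      (sorted_runOf ⟨hc1, hc2, hc3, hc4, hc5⟩))
  have hlenl : l.length = r := by
    have h := congrArg List.length hsnd
    rw [List.length_map, length_rleExp, runOf_snd, hsndM] at h
    rw [h, List.sum_reverse, hc5]
  constructor
  · refine Finset.mem_filter.2 ⟨?_, hentry, hsorted, htriv⟩
    refine mem_listsLen.2 ⟨hlenl, ?_⟩
    intro t ht
    obtain ⟨e1, e2, e3, e4⟩ := hentry t ht
    obtain ⟨c, hcc⟩ := e4
    exact Finset.mem_product.2 ⟨Finset.mem_Icc.2 ⟨e1, by omega⟩,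
      Finset.mem_Icc.2 ⟨by omega, e3⟩⟩
  · have hnodup : ((runOf (p.1.zip p.2)).map Prod.fst).Nodup :=
      List.Pairwise.nodup (sorted_runOf ⟨hc1, hc2, hc3, hc4, hc5⟩)
    have h1 : hive l = ((runOf (p.1.zip p.2)).map Prod.fst).toFinset.card := by
      rw [hive, hsnd, toFinset_rleExp (counts_runOf ⟨hc1, hc2, hc3, hc4, hc5⟩)]
    rw [h1, List.toFinset_card_of_nodup hnodup, List.length_map, runOf, List.length_reverse,
      List.length_map, List.length_zip, hc3, min_self]

lemma mono_to_block {k r : ℕ} {n : PairPartition k} {l : List (ℕ × ℕ)}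
    (hl : l ∈ monoFinset n r) :
    ∃ p : List ℕ × List ℕ, cnd k r p ∧ l ∈ blockLists (p.1.zip p.2) := by
  obtain ⟨hlists, hmono⟩ := Finset.mem_filter.1 hl
  obtain ⟨hent, hsort, htriv⟩ := hmono
  have hlenl : l.length = r := (mem_listsLen.1 hlists).1
  obtain ⟨L₀, hs0, hc0, he0, hf0, hsum0⟩ :=
    run_decomp (l.map Prod.snd).length (l.map Prod.snd) le_rfl hsort
  have hvals : ∀ q ∈ L₀, q.1 ∈ l.map Prod.snd := by
    intro q hq
    have h : q.1 ∈ (L₀.map Prod.fst).toFinset :=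
      List.mem_toFinset.2 (List.mem_map.2 ⟨q, hq, rfl⟩)
    rw [hf0] at h
    exact List.mem_toFinset.1 h
  have hodd : ∀ q ∈ L₀, Odd q.1 ∧ 2 ≤ q.1 ∧ q.1 ≤ 2*k := by
    intro q hq
    obtain ⟨t, ht, h2⟩ := List.mem_map.1 (hvals q hq)
    obtain ⟨e1, e2, e3, e4⟩ := hent t ht
    rw [← h2]
    exact ⟨e4, by omega, e3⟩
  set M : List (ℕ × ℕ) := (L₀.map fun q => ((q.1+1)/2, q.2)).reverse with hMdef
  have hzipM : (M.map Prod.fst).zip (M.map Prod.snd) = M := by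
    rw [List.zip_map']
    simp
  have hMfst : M.map Prod.fst = (L₀.map fun q => (q.1+1)/2).reverse := by
    rw [hMdef, List.map_reverse, List.map_map]
    simp [Function.comp]
  have hMsnd : M.map Prod.snd = (L₀.map Prod.snd).reverse := by
    rw [hMdef, List.map_reverse, List.map_map]
    simp [Function.comp]
  refine ⟨(M.map Prod.fst, M.map Prod.snd), ⟨?_, ?_, ?_, ?_, ?_⟩, ?_⟩
  · -- sorted (>)
    rw [hMfst]
    refine List.pairwise_reverse.2 ?_
    refine List.pairwise_map.2 ?_
    refine List.Pairwise.imp_of_mem ?_ (List.pairwise_map.1 hs0)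
    intro q q' hq hq' hlt
    obtain ⟨⟨x, hx⟩, -, -⟩ := hodd q hq
    obtain ⟨⟨x', hx'⟩, -, -⟩ := hodd q' hq'
    show (q.1+1)/2 < (q'.1+1)/2
    omega
  · -- bounds
    intro i hi
    rw [hMfst, List.mem_reverse] at hi
    obtain ⟨q, hq, rfl⟩ := List.mem_map.1 hi
    obtain ⟨⟨x, hx⟩, h2, h3⟩ := hodd q hq
    constructor <;> omega
  · simp
  · intro a ha
    rw [hMsnd, List.mem_reverse] at ha
    obtain ⟨q, hq, rfl⟩ := List.mem_map.1 ha
    exact hc0 q hq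
  · rw [hMsnd, List.sum_reverse, hsum0, List.length_map, hlenl]
  · rw [hzipM]
    refine (mem_blockLists_iff M l).2 ⟨?_, ?_⟩
    · have hrun : runOf M = L₀ := by
        rw [runOf, hMdef, List.map_reverse, List.reverse_reverse, List.map_map]
        have : ∀ q ∈ L₀, ((fun ia => (2*ia.1-1, ia.2)) ∘ fun q => ((q.1+1)/2, q.2)) q = q := by
          intro q hq
          obtain ⟨⟨x, hx⟩, -, -⟩ := hodd q hq
          simp only [Function.comp_apply]
          have h1 : 2 * ((q.1+1)/2) - 1 = q.1 := by omega
          rw [h1]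
        rw [List.map_congr_left this]
        simp
      rw [hrun, he0]
    · intro t ht
      obtain ⟨e1, e2, -, -⟩ := hent t ht
      exact ⟨e1, by omega⟩

lemma sorted_gt_nodup {l : List ℕ} (h : List.Pairwise (· > ·) l) : l.Nodup := by
  refine List.Pairwise.imp ?_ h
  intro a b hab
  omega

lemma block_unique {k r : ℕ} {p q : List ℕ × List ℕ} (hp : cnd k r p) (hq : cnd k r q)
    {l : List (ℕ × ℕ)} (hlp : l ∈ blockLists (p.1.zip p.2))
    (hlq : l ∈ blockLists (q.1.zip q.2)) : p = q := by
  have h1 := ((mem_blockLists_iff _ l).1 hlp).1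
  have h2 := ((mem_blockLists_iff _ l).1 hlq).1
  have he : rleExp (runOf (p.1.zip p.2)) = rleExp (runOf (q.1.zip q.2)) := by
    rw [← h1, ← h2]
  have hrun : runOf (p.1.zip p.2) = runOf (q.1.zip q.2) :=
    rle_unique _ _ (sorted_runOf hp) (sorted_runOf hq) (counts_runOf hp) (counts_runOf hq) he
  have hinj : Function.Injective (fun ia : ℕ × ℕ => (2*ia.1-1, ia.2)) := by
    rintro ⟨a, x⟩ ⟨b, y⟩ hab
    simp only [Prod.mk.injEq] at hab
    obtain ⟨hab1, hab2⟩ := hab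
    exact Prod.ext_iff.2 ⟨by omega, hab2⟩
  have hzip : p.1.zip p.2 = q.1.zip q.2 := by
    rw [runOf, runOf] at hrun
    have h3 := List.reverse_injective hrun
    exact List.map_injective_iff.2 hinj h3
  have hp1 : p.1 = q.1 := by
    rw [← List.map_fst_zip (l₁ := p.1) (l₂ := p.2) (le_of_eq hp.2.2.1), hzip,
      List.map_fst_zip (l₁ := q.1) (l₂ := q.2) (le_of_eq hq.2.2.1)]
  have hp2 : p.2 = q.2 := by
    rw [← List.map_snd_zip (l₁ := p.1) (l₂ := p.2) (ge_of_eq hp.2.2.1), hzip,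
      List.map_snd_zip (l₁ := q.1) (l₂ := q.2) (ge_of_eq hq.2.2.1)]
  exact Prod.ext_iff.2 ⟨hp1, hp2⟩
end Glue
section Assemble
open PairPartition Finset

def natListsLen (S : Finset ℕ) : ℕ → Finset (List ℕ)
  | 0 => {[]}
  | n + 1 => (S ×ˢ natListsLen S n).image fun p => p.1 :: p.2

lemma mem_natListsLen {S : Finset ℕ} : ∀ {n : ℕ} {l : List ℕ},
    l ∈ natListsLen S n ↔ l.length = n ∧ ∀ t ∈ l, t ∈ S := by
  intro n
  induction n with
  | zero =>
    intro l
    simp only [natListsLen, Finset.mem_singleton]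
    constructor
    · rintro rfl; simp
    · rintro ⟨h, -⟩; exact List.length_eq_zero_iff.1 h
  | succ n ih =>
    intro l
    simp only [natListsLen, Finset.mem_image, Finset.mem_product]
    constructor
    · rintro ⟨⟨t, l'⟩, ⟨ht, hl'⟩, rfl⟩
      obtain ⟨h1, h2⟩ := ih.1 hl'
      refine ⟨by simp [h1], ?_⟩
      intro u hu
      rcases List.mem_cons.1 hu with rfl | hu
      · exact ht
      · exact h2 u hu
    · rintro ⟨hlen, hmem⟩
      match l with
      | [] => simp at hlen
      | t :: l' =>
        exact ⟨(t, l'), ⟨hmem t (by simp),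
          ih.2 ⟨by simpa using hlen, fun u hu => hmem u (List.mem_cons_of_mem _ hu)⟩⟩, rfl⟩

noncomputable def PFin (k r : ℕ) : Finset (List ℕ × List ℕ) :=
  (((Finset.range (k+1)).biUnion (natListsLen (Finset.Icc 1 k))) ×ˢ
    ((Finset.range (k+1)).biUnion (natListsLen (Finset.Icc 1 r)))).filter (cnd k r)

lemma mem_PFin {k r : ℕ} {p : List ℕ × List ℕ} : p ∈ PFin k r ↔ cnd k r p := by
  constructor
  · exact fun h => (Finset.mem_filter.1 h).2
  · intro hc
    obtain ⟨hc1, hc2, hc3, hc4, hc5⟩ := hc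
    have hnd : p.1.Nodup := sorted_gt_nodup hc1
    have hlen1 : p.1.length ≤ k := by
      have h1 : p.1.toFinset.card = p.1.length := List.toFinset_card_of_nodup hnd
      have h2 : p.1.toFinset ⊆ Finset.Icc 1 k := by
        intro x hx
        exact Finset.mem_Icc.2 (hc2 x (List.mem_toFinset.1 hx))
      have h3 := Finset.card_le_card h2
      rw [Nat.card_Icc] at h3
      omega
    refine Finset.mem_filter.2 ⟨Finset.mem_product.2 ⟨?_, ?_⟩, hc1, hc2, hc3, hc4, hc5⟩
    · exact Finset.mem_biUnion.2 ⟨p.1.length, Finset.mem_range.2 (by omega),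
        mem_natListsLen.2 ⟨rfl, fun t ht => Finset.mem_Icc.2 (hc2 t ht)⟩⟩
    · refine Finset.mem_biUnion.2 ⟨p.2.length, Finset.mem_range.2 (by omega), ?_⟩
      refine mem_natListsLen.2 ⟨rfl, fun a ha => Finset.mem_Icc.2 ⟨hc4 a ha, ?_⟩⟩
      calc a ≤ p.2.sum := List.single_le_sum (fun x _ => Nat.zero_le x) a ha
        _ = r := hc5

lemma monoFinset_biUnion (k r : ℕ) (n : PairPartition k) :
    monoFinset n r = (PFin k r).biUnion
      (fun p => (blockLists (p.1.zip p.2)).filter (fun l => applyFacts l n = triv k)) := by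
  ext l
  simp only [Finset.mem_biUnion, Finset.mem_filter]
  constructor
  · intro hl
    obtain ⟨p, hp, hbl⟩ := mono_to_block hl
    exact ⟨p, mem_PFin.2 hp, hbl, ((Finset.mem_filter.1 hl).2).2.2⟩
  · rintro ⟨p, hp, hbl, htriv⟩
    exact (block_to_mono (mem_PFin.1 hp) hbl htriv).1

lemma blockLists_disjoint (k r : ℕ) (n : PairPartition k) :
    (↑(PFin k r) : Set (List ℕ × List ℕ)).PairwiseDisjoint
      (fun p => (blockLists (p.1.zip p.2)).filter (fun l => applyFacts l n = triv k)) := by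
  intro p hp q hq hpq
  refine Finset.disjoint_left.2 ?_
  intro l hlp hlq
  exact hpq (block_unique (mem_PFin.1 hp) (mem_PFin.1 hq)
    (Finset.mem_filter.1 hlp).1 (Finset.mem_filter.1 hlq).1)

lemma lhs_eval (k r : ℕ) (n : PairPartition k) :
    (∑ p ∈ PFin k r,
      ((MvPolynomial.X 1 : MvPolynomial (Fin 2) ℤ) ^ p.1.length) •
        applyPows (MvPolynomial.X 0 : MvPolynomial (Fin 2) ℤ) (p.1.zip p.2)
          (basisVec k (triv k))) n = btSum n r := by
  rw [Finset.sum_apply]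
  have step : ∀ p ∈ PFin k r,
      ((MvPolynomial.X 1 : MvPolynomial (Fin 2) ℤ) ^ p.1.length) •
        applyPows (MvPolynomial.X 0 : MvPolynomial (Fin 2) ℤ) (p.1.zip p.2)
          (basisVec k (triv k)) n
      = ∑ l ∈ (blockLists (p.1.zip p.2)).filter (fun l => applyFacts l n = triv k),
          (MvPolynomial.X 0 : MvPolynomial (Fin 2) ℤ) ^ (flip n l) *
            (MvPolynomial.X 1) ^ (hive l) := by
    intro p hp
    have hc := mem_PFin.1 hp
    rw [smul_eq_mul, applyPows_expand, Finset.mul_sum, Finset.sum_filter]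
    refine Finset.sum_congr rfl fun l hl => ?_
    by_cases ht : applyFacts l n = triv k
    · rw [if_pos ht]
      have hb := block_to_mono hc hl ht
      have h1 : basisVec (R := MvPolynomial (Fin 2) ℤ) k (triv k) (applyFacts l n) = 1 :=
        if_pos ht
      rw [h1, hb.2]
      ring
    · have h1 : basisVec (R := MvPolynomial (Fin 2) ℤ) k (triv k) (applyFacts l n) = 0 :=
        if_neg ht
      rw [if_neg ht, h1]
      ring
  simp only [Pi.smul_apply]
  rw [Finset.sum_congr rfl step, ← Finset.sum_biUnion (blockLists_disjoint k r n),
    ← monoFinset_biUnion, btSum]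
end Assemble
section Coset
open PairPartition Finset

variable {k : ℕ}

lemma mf_mem_iff (m : PairPartition k) (x : ℕ) :
    (1 ≤ m.f x ∧ m.f x ≤ 2*k) ↔ (1 ≤ x ∧ x ≤ 2*k) := by
  constructor
  · intro hx
    by_contra hc
    have h1 : ¬ (m.f x ≠ x) := by rw [m.moves x]; omega
    have hfx : m.f x = x := by tauto
    omega
  · intro hx
    by_contra hc
    have h1 : ¬ (m.f (m.f x) ≠ m.f x) := by rw [m.moves (m.f x)]; omega
    have h2 : m.f (m.f x) = m.f x := by tauto
    rw [m.invol] at h2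
    have h3 : m.f x ≠ x := (m.moves x).2 hx
    exact h3 h2.symm

def presSubgroup (k : ℕ) : Subgroup (Equiv.Perm ℕ) where
  carrier := {σ | ∀ x : ℕ, (1 ≤ σ x ∧ σ x ≤ 2*k) ↔ (1 ≤ x ∧ x ≤ 2*k)}
  one_mem' := by intro x; simp
  mul_mem' := by
    intro a b ha hb x
    have h1 : (a * b) x = a (b x) := rfl
    show (1 ≤ (a * b) x ∧ (a * b) x ≤ 2*k) ↔ _
    rw [h1]
    exact (ha (b x)).trans (hb x)
  inv_mem' := by
    intro a ha x
    have h1 := ha (a⁻¹ x)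
    rw [show a (a⁻¹ x) = x from a.apply_symm_apply x] at h1
    exact h1.symm

lemma mem_presSubgroup_iff {σ : Equiv.Perm ℕ} :
    σ ∈ presSubgroup k ↔ ∀ x : ℕ, (1 ≤ σ x ∧ σ x ≤ 2*k) ↔ (1 ≤ x ∧ x ≤ 2*k) := Iff.rfl

lemma closure_pres (m : PairPartition k) :
    Subgroup.closure {(triv k).perm, m.perm} ≤ presSubgroup k := by
  rw [Subgroup.closure_le]
  intro σ hσ
  rcases Set.mem_insert_iff.1 hσ with rfl | hσ
  · intro x
    show (1 ≤ trivFun k x ∧ trivFun k x ≤ 2*k) ↔ _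
    unfold trivFun
    split_ifs <;> omega
  · rw [Set.mem_singleton_iff.1 hσ]
    intro x
    exact mf_mem_iff m x

lemma gammaOrbit_subset (m : PairPartition k) {a : ℕ} (ha1 : 1 ≤ a) (ha2 : a ≤ 2*k) :
    gammaOrbit m a ⊆ Set.Icc 1 (2*k) := by
  rintro y ⟨g, rfl⟩
  have hg := mem_presSubgroup_iff.1 (closure_pres m g.2)
  rw [Set.mem_Icc]
  exact (hg a).2 ⟨ha1, ha2⟩

lemma gammaOrbit_finite (m : PairPartition k) {a : ℕ} (ha1 : 1 ≤ a) (ha2 : a ≤ 2 * k) :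
    (gammaOrbit m a).Finite :=
  (Set.finite_Icc 1 (2*k)).subset (gammaOrbit_subset m ha1 ha2)

lemma mem_gammaOrbit_self (m : PairPartition k) (a : ℕ) : a ∈ gammaOrbit m a :=
  MulAction.mem_orbit_self a

lemma gammaOrbit_eq_of_mem (m : PairPartition k) {a b : ℕ} (h : b ∈ gammaOrbit m a) :
    gammaOrbit m b = gammaOrbit m a :=
  MulAction.orbit_eq_iff.2 h

lemma triv_mem_gammaOrbit (m : PairPartition k) {a x : ℕ} (h : x ∈ gammaOrbit m a) :
    (triv k).perm x ∈ gammaOrbit m a := by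
  obtain ⟨g, rfl⟩ := h
  exact ⟨(⟨(triv k).perm, Subgroup.subset_closure (by simp)⟩ : Subgroup.closure
    {(triv k).perm, m.perm}) * g, rfl⟩

lemma trivFun_ne (x : ℕ) (h1 : 1 ≤ x) (h2 : x ≤ 2*k) : trivFun k x ≠ x := by
  unfold trivFun
  split_ifs <;> omega

lemma even_ncard_invol (f : ℕ → ℕ) (hinv : ∀ x, f (f x) = x) :
    ∀ (N : ℕ) (s : Set ℕ), s.ncard ≤ N → s.Finite → (∀ x ∈ s, f x ∈ s) →
      (∀ x ∈ s, f x ≠ x) → Even s.ncard := by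
  intro N
  induction N with
  | zero =>
    intro s h _ _ _
    simp [Nat.le_zero.1 h]
  | succ N ih =>
    intro s hle hfin hmap hne
    rcases Set.eq_empty_or_nonempty s with rfl | ⟨a, ha⟩
    · simp
    · have hfa : f a ∈ s := hmap a ha
      have hane : f a ≠ a := hne a ha
      have hpair : ({a, f a} : Set ℕ) ⊆ s := by
        intro x hx
        rcases hx with rfl | hx
        · exact ha
        · rw [Set.mem_singleton_iff.1 hx]; exact hfa
      have hpc : ({a, f a} : Set ℕ).ncard = 2 := Set.ncard_pair (Ne.symm hane)
      have hfin' : (s \ {a, f a}).Finite := hfin.subset Set.diff_subset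
      have hcard : (s \ {a, f a}).ncard = s.ncard - 2 := by
        rw [Set.ncard_diff hpair, hpc]
      have h2le : 2 ≤ s.ncard := by
        have := Set.ncard_le_ncard hpair hfin
        omega
      have hmap' : ∀ x ∈ s \ {a, f a}, f x ∈ s \ {a, f a} := by
        rintro x ⟨hxs, hxn⟩
        refine ⟨hmap x hxs, ?_⟩
        intro hc
        rcases hc with hc | hc
        · apply hxn
          right
          have := congrArg f hc
          rw [hinv] at this
          rw [this]
          rfl
        · apply hxn
          left
          have := congrArg f (Set.mem_singleton_iff.1 hc)
          rw [hinv, hinv] at this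
          exact this
      have hne' : ∀ x ∈ s \ {a, f a}, f x ≠ x := fun x hx => hne x hx.1
      obtain ⟨c, hc⟩ := ih (s \ {a, f a}) (by omega) hfin' hmap' hne'
      have hS : s.ncard = (s \ {a, f a}).ncard + 2 := by omega
      exact ⟨c + 1, by omega⟩

noncomputable def orbFin (m : PairPartition k) (a : ℕ) : Finset ℕ :=
  (Finset.Icc 1 (2*k)).filter (fun x => x ∈ gammaOrbit m a)

lemma coe_orbFin (m : PairPartition k) {a : ℕ} (ha : a ∈ Finset.Icc 1 (2*k)) :
    ↑(orbFin m a) = gammaOrbit m a := by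
  rw [Finset.mem_Icc] at ha
  ext x
  simp only [orbFin, Finset.coe_filter, Set.mem_setOf_eq, Finset.mem_Icc]
  constructor
  · rintro ⟨-, h⟩; exact h
  · intro h
    have h2 := gammaOrbit_subset m ha.1 ha.2 h
    rw [Set.mem_Icc] at h2
    exact ⟨h2, h⟩

lemma orbFin_card (m : PairPartition k) {a : ℕ} (ha : a ∈ Finset.Icc 1 (2*k)) :
    (orbFin m a).card = (gammaOrbit m a).ncard := by
  rw [← coe_orbFin m ha, Set.ncard_coe_finset]

lemma dvd_card_of_orbits (c : ℕ) (F : ℕ → Finset ℕ) :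
    ∀ (N : ℕ) (T : Finset ℕ), T.card ≤ N →
      (∀ a ∈ T, a ∈ F a ∧ F a ⊆ T ∧ (F a).card = c ∧ (∀ y ∈ F a, F y = F a)) →
      c ∣ T.card := by
  intro N
  induction N with
  | zero =>
    intro T h _
    rw [Finset.card_eq_zero.1 (Nat.le_zero.1 h)]
    simp
  | succ N ih =>
    intro T hle hF
    rcases Finset.eq_empty_or_nonempty T with rfl | ⟨a, ha⟩
    · simp
    obtain ⟨haF, hsub, hcard, horb⟩ := hF a ha
    have hcpos : 1 ≤ c := by
      rw [← hcard]
      exact Finset.card_pos.2 ⟨a, haF⟩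
    have hcle : c ≤ T.card := hcard ▸ Finset.card_le_card hsub
    have hc1 : (T \ F a).card = T.card - c := by rw [Finset.card_sdiff_of_subset hsub, hcard]
    have hF' : ∀ b ∈ T \ F a, b ∈ F b ∧ F b ⊆ T \ F a ∧ (F b).card = c ∧
        (∀ y ∈ F b, F y = F b) := by
      intro b hb
      have hbT : b ∈ T := (Finset.mem_sdiff.1 hb).1
      have hbn : b ∉ F a := (Finset.mem_sdiff.1 hb).2
      obtain ⟨h1, h2, h3, h4⟩ := hF b hbT
      refine ⟨h1, ?_, h3, h4⟩
      intro x hx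
      refine Finset.mem_sdiff.2 ⟨h2 hx, ?_⟩
      intro hxa
      apply hbn
      have e1 := h4 x hx
      have e2 := horb x hxa
      have e3 : F b = F a := by rw [← e1, e2]
      rw [← e3]
      exact h1
    obtain ⟨d, hd⟩ := ih (T \ F a) (by omega) hF'
    exact ⟨d + 1, by rw [Nat.mul_succ]; omega⟩
end Coset
section CosetPartition
open PairPartition Finset

variable {k : ℕ}

lemma gammaOrbit_ncard_even (m : PairPartition k) {a : ℕ} (ha1 : 1 ≤ a) (ha2 : a ≤ 2*k) :
    Even (gammaOrbit m a).ncard := by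
  refine even_ncard_invol ((triv k).perm) (fun x => (triv k).invol x)
    (gammaOrbit m a).ncard _ le_rfl (gammaOrbit_finite m ha1 ha2)
    (fun x hx => triv_mem_gammaOrbit m hx) ?_
  intro x hx
  have hxI := gammaOrbit_subset m ha1 ha2 hx
  rw [Set.mem_Icc] at hxI
  exact trivFun_ne x hxI.1 hxI.2

lemma gammaOrbit_ncard_pos (m : PairPartition k) {a : ℕ} (ha1 : 1 ≤ a) (ha2 : a ≤ 2*k) :
    1 ≤ (gammaOrbit m a).ncard :=
  (Set.ncard_pos (gammaOrbit_finite m ha1 ha2)).2 ⟨a, mem_gammaOrbit_self m a⟩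

lemma gammaOrbit_ncard_le (m : PairPartition k) {a : ℕ} (ha1 : 1 ≤ a) (ha2 : a ≤ 2*k) :
    (gammaOrbit m a).ncard ≤ 2*k := by
  have h1 := Set.ncard_le_ncard (gammaOrbit_subset m ha1 ha2) (Set.finite_Icc _ _)
  have h2 : (Set.Icc 1 (2*k)).ncard = 2*k := by
    rw [← Finset.coe_Icc, Set.ncard_coe_finset, Nat.card_Icc]
    omega
  omega

noncomputable def Tset (m : PairPartition k) (ℓ : ℕ) : Finset ℕ :=
  (Finset.Icc 1 (2*k)).filter (fun a => (gammaOrbit m a).ncard = 2*ℓ)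

lemma cycleCount_eq (m : PairPartition k) (ℓ : ℕ) :
    cycleCount m ℓ = (Tset m ℓ).card / (2*ℓ) := rfl

lemma dvd_Tset (m : PairPartition k) (ℓ : ℕ) : 2*ℓ ∣ (Tset m ℓ).card := by
  refine dvd_card_of_orbits (2*ℓ) (orbFin m) (Tset m ℓ).card _ le_rfl ?_
  intro a haT
  obtain ⟨haI, hacard⟩ := Finset.mem_filter.1 haT
  refine ⟨Finset.mem_filter.2 ⟨haI, mem_gammaOrbit_self m a⟩, ?_, ?_, ?_⟩
  · intro b hb
    obtain ⟨hbI, hbo⟩ := Finset.mem_filter.1 hb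
    refine Finset.mem_filter.2 ⟨hbI, ?_⟩
    rw [gammaOrbit_eq_of_mem m hbo, hacard]
  · rw [orbFin_card m haI, hacard]
  · intro y hy
    obtain ⟨hyI, hyo⟩ := Finset.mem_filter.1 hy
    unfold orbFin
    rw [gammaOrbit_eq_of_mem m hyo]

lemma sum_Tset_card (m : PairPartition k) :
    ∑ ℓ ∈ Finset.Icc 1 k, (Tset m ℓ).card = 2*k := by
  have h := Finset.card_eq_sum_card_fiberwise
    (f := fun a => (gammaOrbit m a).ncard / 2) (s := Finset.Icc 1 (2*k))
    (t := Finset.Icc 1 k) ?_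
  · have h2 : ∀ ℓ ∈ Finset.Icc 1 k,
        ((Finset.Icc 1 (2*k)).filter (fun a => (gammaOrbit m a).ncard / 2 = ℓ))
          = Tset m ℓ := by
      intro ℓ hℓ
      refine Finset.filter_congr ?_
      intro a haI
      rw [Finset.mem_Icc] at haI
      obtain ⟨c, hc⟩ := gammaOrbit_ncard_even m haI.1 haI.2
      constructor <;> intro h' <;> omega
    rw [Nat.card_Icc] at h
    have h3 : ∑ ℓ ∈ Finset.Icc 1 k,
        ((Finset.Icc 1 (2*k)).filter (fun a => (gammaOrbit m a).ncard / 2 = ℓ)).card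
        = ∑ ℓ ∈ Finset.Icc 1 k, (Tset m ℓ).card :=
      Finset.sum_congr rfl (fun ℓ hℓ => by rw [h2 ℓ hℓ])
    omega
  · intro a haI
    rw [Finset.coe_Icc, Set.mem_Icc] at haI
    obtain ⟨c, hc⟩ := gammaOrbit_ncard_even m haI.1 haI.2
    have hp := gammaOrbit_ncard_pos m haI.1 haI.2
    have hl := gammaOrbit_ncard_le m haI.1 haI.2
    simp only [Finset.coe_Icc, Set.mem_Icc]
    omega

noncomputable def cosetMultiset (m : PairPartition k) : Multiset ℕ :=
  ∑ ℓ ∈ Finset.Icc 1 k, Multiset.replicate (cycleCount m ℓ) ℓ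

lemma count_cosetMultiset (m : PairPartition k) (j : ℕ) :
    (cosetMultiset m).count j = if j ∈ Finset.Icc 1 k then cycleCount m j else 0 := by
  rw [cosetMultiset, Multiset.count_sum']
  by_cases hj : j ∈ Finset.Icc 1 k
  · rw [if_pos hj, Finset.sum_eq_single j]
    · rw [Multiset.count_replicate, if_pos rfl]
    · intro b hb hbj
      rw [Multiset.count_replicate, if_neg hbj]
    · intro h; exact absurd hj h
  · rw [if_neg hj]
    refine Finset.sum_eq_zero fun b hb => ?_
    rw [Multiset.count_replicate]
    refine if_neg (fun hbj => hj ?_)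
    rw [← hbj]
    exact hb

lemma sum_multiset_fin (s : Finset ℕ) (f : ℕ → Multiset ℕ) :
    (∑ i ∈ s, f i).sum = ∑ i ∈ s, (f i).sum := by
  classical
  induction s using Finset.induction_on with
  | empty => simp
  | insert _ _ h ih =>
    rw [Finset.sum_insert h, Finset.sum_insert h, Multiset.sum_add, ih]

lemma cosetMultiset_sum (m : PairPartition k) : (cosetMultiset m).sum = k := by
  have h1 : 2 * (cosetMultiset m).sum = 2 * k := by
    rw [cosetMultiset, sum_multiset_fin, Finset.mul_sum]
    have hstep : ∀ ℓ ∈ Finset.Icc 1 k,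
        2 * (Multiset.replicate (cycleCount m ℓ) ℓ).sum = (Tset m ℓ).card := by
      intro ℓ hℓ
      rw [Multiset.sum_replicate, smul_eq_mul]
      obtain ⟨d, hd⟩ := dvd_Tset m ℓ
      have hℓ1 := (Finset.mem_Icc.1 hℓ).1
      rw [cycleCount_eq, hd, Nat.mul_div_cancel_left d (by omega)]
      ring
    rw [Finset.sum_congr rfl hstep, sum_Tset_card]
  omega

lemma cosetMultiset_pos (m : PairPartition k) {i : ℕ} (hi : i ∈ cosetMultiset m) : 0 < i := by
  obtain ⟨ℓ, hℓ, hmem⟩ := Multiset.mem_sum.1 hi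
  rw [Multiset.eq_of_mem_replicate hmem]
  exact (Finset.mem_Icc.1 hℓ).1

noncomputable def cosetPartition (m : PairPartition k) : Nat.Partition k :=
  ⟨cosetMultiset m, fun hi => cosetMultiset_pos m hi, cosetMultiset_sum m⟩

lemma hasCosetType_cosetPartition (m : PairPartition k) :
    HasCosetType m (cosetPartition m).parts := by
  intro ℓ hℓ
  show (cosetMultiset m).count ℓ = _
  rw [count_cosetMultiset]
  by_cases h : ℓ ∈ Finset.Icc 1 k
  · rw [if_pos h]
  · rw [if_neg h]
    have hk : k < ℓ := by
      rw [Finset.mem_Icc] at h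
      omega
    have hT : Tset m ℓ = ∅ := by
      rw [Finset.eq_empty_iff_forall_notMem]
      intro a haT
      obtain ⟨haI, hac⟩ := Finset.mem_filter.1 haT
      rw [Finset.mem_Icc] at haI
      have := gammaOrbit_ncard_le m haI.1 haI.2
      omega
    rw [cycleCount_eq, hT]
    simp

lemma cosetPartition_unique (m : PairPartition k) (μ : Nat.Partition k)
    (h : HasCosetType m μ.parts) : μ = cosetPartition m := by
  apply Nat.Partition.ext
  refine Multiset.ext.2 fun j => ?_
  rcases Nat.eq_zero_or_pos j with rfl | hj
  · have hA : Multiset.count 0 μ.parts = 0 :=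
      Multiset.count_eq_zero.2 (fun hc => lt_irrefl 0 (μ.parts_pos hc))
    have hB : Multiset.count 0 (cosetPartition m).parts = 0 :=
      Multiset.count_eq_zero.2 (fun hc => lt_irrefl 0 (cosetMultiset_pos m hc))
    rw [hA, hB]
  · rw [h j hj]
    exact (hasCosetType_cosetPartition m j hj).symm

lemma rhs_eval (k r : ℕ) (hh : Nat.Partition k → MvPolynomial (Fin 2) ℤ)
    (hhdef : ∀ (μ : Nat.Partition k) (m : PairPartition k),
      HasCosetType m μ.parts → hh μ = btSum m r) (n : PairPartition k) :
    (∑ μ : Nat.Partition k,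
        hh μ • (pVec k μ.parts : PairPartition k → MvPolynomial (Fin 2) ℤ)) n
      = btSum n r := by
  rw [Finset.sum_apply]
  rw [Finset.sum_eq_single (cosetPartition n)]
  · rw [Pi.smul_apply, smul_eq_mul]
    have h1 : pVec (R := MvPolynomial (Fin 2) ℤ) k (cosetPartition n).parts n = 1 :=
      if_pos (hasCosetType_cosetPartition n)
    rw [h1, mul_one]
    exact hhdef _ n (hasCosetType_cosetPartition n)
  · intro μ _ hne
    have hncs : ¬ HasCosetType n μ.parts := fun h => hne (cosetPartition_unique n μ h)
    rw [Pi.smul_apply, smul_eq_mul]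
    have h1 : pVec (R := MvPolynomial (Fin 2) ℤ) k μ.parts n = 0 := if_neg hncs
    rw [h1, mul_zero]
  · intro h
    exact absurd (Finset.mem_univ _) h
end CosetPartition
/-- **Monomial symmetric functions of the `b`-deformed Jucys–Murphy operators and
`bt`-monotone counts** (proof of Proposition 4.24, Equation (4.13)).  Let `k ≥ 1`,
`r ≥ 0`, and let `ĥ_r(μ) = ∑_{τ ∈ Mono(𝔪), ℓ(τ)=r} b^{flip(τ)} t^{hive(τ)}` for any
pair partition `𝔪` of coset-type `μ ⊢ k`.  In the free `ℤ[b,t]`-module with basis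
`𝒫_k` (`b = X 0`, `t = X 1`):
`∑_{ν ⊢ r} t^{ℓ(ν)} m_ν^≥(𝒥_1,…,𝒥_k)(𝔢_k) = ∑_{μ ⊢ k} ĥ_r(μ) · 𝔭_μ`,
the left side being the sum over strictly decreasing index tuples
`k ≥ i₁ > ⋯ > i_ℓ ≥ 1` and all compositions `(a₁,…,a_ℓ)` of `r` into `ℓ` positive
parts of `t^ℓ ⬝ 𝒥_{i₁}^{a₁} ⋯ 𝒥_{i_ℓ}^{a_ℓ}(𝔢_k)` — i.e. exactly
`∑_{ν ⊢ r} t^{ℓ(ν)}` times the decreasing-index ordered analogue `m_ν^≥` of the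
monomial symmetric polynomial. -/
theorem monomial_symmetric_bJucysMurphy
    (k r : ℕ) (hk : 1 ≤ k)
    (hh : Nat.Partition k → MvPolynomial (Fin 2) ℤ)
    (hhdef : ∀ (μ : Nat.Partition k) (m : PairPartition k),
      HasCosetType m μ.parts → hh μ = btSum m r) :
    (∑ᶠ (p : List ℕ × List ℕ)
      (_ : List.Pairwise (· > ·) p.1 ∧ (∀ i ∈ p.1, 1 ≤ i ∧ i ≤ k) ∧
           p.1.length = p.2.length ∧ (∀ a ∈ p.2, 1 ≤ a) ∧ p.2.sum = r),
      ((MvPolynomial.X 1 : MvPolynomial (Fin 2) ℤ) ^ p.1.length) •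
        applyPows (MvPolynomial.X 0 : MvPolynomial (Fin 2) ℤ) (p.1.zip p.2)
          (basisVec k (triv k)))
    = ∑ μ : Nat.Partition k, hh μ • (pVec k μ.parts : PairPartition k → MvPolynomial (Fin 2) ℤ) := by
  refine Eq.trans (finsum_cond_eq_sum_of_cond_iff _
    (fun {x} _ => (mem_PFin (k := k) (r := r)).symm)) ?_
  funext n
  exact (lhs_eval k r n).trans (rhs_eval k r hh hhdef n).symm
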